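/- Let ε₀ > 0 be sufficiently small, let K_L be sufficiently large, let h₀(ξ,η) = ξη + Σ_{i=3}^{d} Σ_{j=0}^{i} b_{i,j} ξ^{i−j} η^{j} with 100^d Σ|b_{i,j}| ≤ ε₀, and let ζ̄ = (ζ̄₁,ζ̄₂) ∈ [-2,2]² satisfy |ζ̄| > (2K_L)^{-1} and |ζ̄₁| ≥ |ζ̄₂|. Define P(ξ,η) = ∂₁h₀(ξ,η)·∂₂h₀(ζ̄) − ∂₂h₀(ξ,η)·∂₁h₀(ζ̄). Then for every (ξ,η) ∈ [-4,4]², one has |∂₂P(ξ,η)| ≥ 1/(4K_L) and |∂₂P(ξ,η)| ≥ (1/2)|∂₁P(ξ,η)|. -/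

import Mathlib

noncomputable section

/-- The normalized polynomial `h₀(ξ,η) = ξη + Σ_{i=3}^d Σ_{j=0}^i b_{i,j} ξ^{i-j} η^j`. -/
def hpoly0 (d : ℕ) (b : ℕ → ℕ → ℝ) (ξ η : ℝ) : ℝ :=
  ξ * η + ∑ i ∈ Finset.Icc 3 d, ∑ j ∈ Finset.range (i + 1), b i j * ξ ^ (i - j) * η ^ j

/-- Smallness of the higher order coefficients: `100^d Σ |b_{i,j}| ≤ ε₀`. -/
def CoeffSmall0 (d : ℕ) (ε₀ : ℝ) (b : ℕ → ℕ → ℝ) : Prop :=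
  100 ^ d * ∑ i ∈ Finset.Icc 3 d, ∑ j ∈ Finset.range (i + 1), |b i j| ≤ ε₀

/-- Partial derivative in the first variable. -/
def pd1 (g : ℝ → ℝ → ℝ) : ℝ → ℝ → ℝ := fun x y => deriv (fun s => g s y) x

/-- Partial derivative in the second variable. -/
def pd2 (g : ℝ → ℝ → ℝ) : ℝ → ℝ → ℝ := fun x y => deriv (fun t => g x t) y

open Finset in
private lemma diff_dsum (d : ℕ) (c : ℕ → ℕ → ℝ) (m : ℕ → ℕ → ℕ) (x : ℝ) :
    DifferentiableAt ℝ (fun s : ℝ => ∑ i ∈ Finset.Icc 3 d, ∑ j ∈ Finset.range (i + 1),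
      c i j * s ^ m i j) x := by
  apply DifferentiableAt.fun_sum; intro i _
  apply DifferentiableAt.fun_sum; intro j _
  exact (differentiableAt_pow _).const_mul _

private lemma deriv_dsum (d : ℕ) (c : ℕ → ℕ → ℝ) (m : ℕ → ℕ → ℕ) (x : ℝ) :
    deriv (fun s : ℝ => ∑ i ∈ Finset.Icc 3 d, ∑ j ∈ Finset.range (i + 1),
        c i j * s ^ m i j) x
      = ∑ i ∈ Finset.Icc 3 d, ∑ j ∈ Finset.range (i + 1),
          c i j * m i j * x ^ (m i j - 1) := by
  rw [deriv_fun_sum (fun i _ => by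
    apply DifferentiableAt.fun_sum; intro j _; exact (differentiableAt_pow _).const_mul _)]
  refine Finset.sum_congr rfl fun i _ => ?_
  rw [deriv_fun_sum (fun j _ => (differentiableAt_pow _).const_mul _)]
  refine Finset.sum_congr rfl fun j _ => ?_
  rw [deriv_const_mul _ (differentiableAt_pow _), deriv_pow_field]; ring

private lemma deriv_lin_dsum (d : ℕ) (a : ℝ) (c : ℕ → ℕ → ℝ) (m : ℕ → ℕ → ℕ) (x : ℝ) :
    deriv (fun s : ℝ => a * s + ∑ i ∈ Finset.Icc 3 d, ∑ j ∈ Finset.range (i + 1),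
        c i j * s ^ m i j) x
      = a + ∑ i ∈ Finset.Icc 3 d, ∑ j ∈ Finset.range (i + 1),
          c i j * m i j * x ^ (m i j - 1) := by
  rw [deriv_fun_add ((differentiableAt_fun_id.const_mul a)) (diff_dsum d c m x), deriv_dsum]
  congr 1
  rw [deriv_const_mul _ differentiableAt_fun_id]
  simp

private lemma pd1_h (d : ℕ) (b : ℕ → ℕ → ℝ) (x y : ℝ) :
    pd1 (hpoly0 d b) x y
      = y + ∑ i ∈ Finset.Icc 3 d, ∑ j ∈ Finset.range (i + 1),
          (b i j * ((i - j : ℕ) : ℝ) * x ^ (i - j - 1)) * y ^ j := by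
  have e : (fun s => hpoly0 d b s y)
      = fun s => y * s + ∑ i ∈ Finset.Icc 3 d, ∑ j ∈ Finset.range (i + 1),
          (b i j * y ^ j) * s ^ (i - j) := by
    funext s
    unfold hpoly0
    rw [mul_comm s y]
    congr 1
    exact Finset.sum_congr rfl fun i _ => Finset.sum_congr rfl fun j _ => by ring
  unfold pd1
  rw [e, deriv_lin_dsum d y (fun i j => b i j * y ^ j) (fun i j => i - j) x]
  congr 1
  exact Finset.sum_congr rfl fun i _ => Finset.sum_congr rfl fun j _ => by ring

private lemma pd2_h (d : ℕ) (b : ℕ → ℕ → ℝ) (x y : ℝ) :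
    pd2 (hpoly0 d b) x y
      = x + ∑ i ∈ Finset.Icc 3 d, ∑ j ∈ Finset.range (i + 1),
          (b i j * ((j : ℕ) : ℝ) * x ^ (i - j)) * y ^ (j - 1) := by
  have e : (fun t => hpoly0 d b x t)
      = fun t => x * t + ∑ i ∈ Finset.Icc 3 d, ∑ j ∈ Finset.range (i + 1),
          (b i j * x ^ (i - j)) * t ^ j := by
    rfl
  unfold pd2
  rw [e, deriv_lin_dsum d x (fun i j => b i j * x ^ (i - j)) (fun i j => j) y]
  congr 1
  exact Finset.sum_congr rfl fun i _ => Finset.sum_congr rfl fun j _ => by ring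

private lemma deriv_const_dsum (d : ℕ) (a : ℝ) (c : ℕ → ℕ → ℝ) (m : ℕ → ℕ → ℕ) (x : ℝ) :
    deriv (fun s : ℝ => a + ∑ i ∈ Finset.Icc 3 d, ∑ j ∈ Finset.range (i + 1),
        c i j * s ^ m i j) x
      = ∑ i ∈ Finset.Icc 3 d, ∑ j ∈ Finset.range (i + 1),
          c i j * m i j * x ^ (m i j - 1) := by
  rw [deriv_const_add, deriv_dsum]

private lemma pd2_P (d : ℕ) (b : ℕ → ℕ → ℝ) (A B x y : ℝ) :
    pd2 (fun x y => pd1 (hpoly0 d b) x y * A - pd2 (hpoly0 d b) x y * B) x y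
      = (1 + ∑ i ∈ Finset.Icc 3 d, ∑ j ∈ Finset.range (i + 1),
            (b i j * ((i - j : ℕ) : ℝ) * x ^ (i - j - 1)) * ((j : ℕ) : ℝ) * y ^ (j - 1)) * A
        - (∑ i ∈ Finset.Icc 3 d, ∑ j ∈ Finset.range (i + 1),
            (b i j * ((j : ℕ) : ℝ) * x ^ (i - j)) * ((j - 1 : ℕ) : ℝ) * y ^ (j - 1 - 1)) * B := by
  have hf : DifferentiableAt ℝ (fun t : ℝ => (1 * t + ∑ i ∈ Finset.Icc 3 d,
      ∑ j ∈ Finset.range (i + 1), (b i j * ((i - j : ℕ) : ℝ) * x ^ (i - j - 1)) * t ^ j) * A) y :=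
    ((differentiableAt_fun_id.const_mul 1).add
      (diff_dsum d (fun i j => b i j * ((i - j : ℕ) : ℝ) * x ^ (i - j - 1)) (fun i j => j) y)).mul_const A
  have hg : DifferentiableAt ℝ (fun t : ℝ => (x + ∑ i ∈ Finset.Icc 3 d,
      ∑ j ∈ Finset.range (i + 1), (b i j * ((j : ℕ) : ℝ) * x ^ (i - j)) * t ^ (j - 1)) * B) y :=
    ((diff_dsum d (fun i j => b i j * ((j : ℕ) : ℝ) * x ^ (i - j)) (fun i j => j - 1) y).const_add x).mul_const B
  have e : (fun t => pd1 (hpoly0 d b) x t * A - pd2 (hpoly0 d b) x t * B)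
      = fun t => (1 * t + ∑ i ∈ Finset.Icc 3 d, ∑ j ∈ Finset.range (i + 1),
            (b i j * ((i - j : ℕ) : ℝ) * x ^ (i - j - 1)) * t ^ j) * A
          - (x + ∑ i ∈ Finset.Icc 3 d, ∑ j ∈ Finset.range (i + 1),
            (b i j * ((j : ℕ) : ℝ) * x ^ (i - j)) * t ^ (j - 1)) * B := by
    funext t
    rw [pd1_h, pd2_h, one_mul]
  show deriv (fun t => pd1 (hpoly0 d b) x t * A - pd2 (hpoly0 d b) x t * B) y = _
  rw [e, deriv_fun_sub hf hg,
      deriv_mul_const ((differentiableAt_fun_id.const_mul (1:ℝ)).fun_add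
        (diff_dsum d (fun i j => b i j * ((i - j : ℕ) : ℝ) * x ^ (i - j - 1)) (fun i j => j) y)),
      deriv_mul_const ((diff_dsum d (fun i j => b i j * ((j : ℕ) : ℝ) * x ^ (i - j))
        (fun i j => j - 1) y).const_add x),
      deriv_lin_dsum d 1 (fun i j => b i j * ((i - j : ℕ) : ℝ) * x ^ (i - j - 1)) (fun i j => j) y,
      deriv_const_dsum d x (fun i j => b i j * ((j : ℕ) : ℝ) * x ^ (i - j)) (fun i j => j - 1) y]

private lemma pd1_P (d : ℕ) (b : ℕ → ℕ → ℝ) (A B x y : ℝ) :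
    pd1 (fun x y => pd1 (hpoly0 d b) x y * A - pd2 (hpoly0 d b) x y * B) x y
      = (∑ i ∈ Finset.Icc 3 d, ∑ j ∈ Finset.range (i + 1),
            (b i j * ((i - j : ℕ) : ℝ) * y ^ j) * ((i - j - 1 : ℕ) : ℝ) * x ^ (i - j - 1 - 1)) * A
        - (1 + ∑ i ∈ Finset.Icc 3 d, ∑ j ∈ Finset.range (i + 1),
            (b i j * ((j : ℕ) : ℝ) * y ^ (j - 1)) * ((i - j : ℕ) : ℝ) * x ^ (i - j - 1)) * B := by
  have s1 : ∀ s : ℝ, (∑ i ∈ Finset.Icc 3 d, ∑ j ∈ Finset.range (i + 1),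
        (b i j * ((i - j : ℕ) : ℝ) * s ^ (i - j - 1)) * y ^ j)
      = ∑ i ∈ Finset.Icc 3 d, ∑ j ∈ Finset.range (i + 1),
        (b i j * ((i - j : ℕ) : ℝ) * y ^ j) * s ^ (i - j - 1) := fun s =>
    Finset.sum_congr rfl fun i _ => Finset.sum_congr rfl fun j _ => by ring
  have s2 : ∀ s : ℝ, (∑ i ∈ Finset.Icc 3 d, ∑ j ∈ Finset.range (i + 1),
        (b i j * ((j : ℕ) : ℝ) * s ^ (i - j)) * y ^ (j - 1))
      = ∑ i ∈ Finset.Icc 3 d, ∑ j ∈ Finset.range (i + 1),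
        (b i j * ((j : ℕ) : ℝ) * y ^ (j - 1)) * s ^ (i - j) := fun s =>
    Finset.sum_congr rfl fun i _ => Finset.sum_congr rfl fun j _ => by ring
  have hf : DifferentiableAt ℝ (fun s : ℝ => (y + ∑ i ∈ Finset.Icc 3 d,
      ∑ j ∈ Finset.range (i + 1), (b i j * ((i - j : ℕ) : ℝ) * y ^ j) * s ^ (i - j - 1)) * A) x :=
    ((diff_dsum d (fun i j => b i j * ((i - j : ℕ) : ℝ) * y ^ j) (fun i j => i - j - 1) x).const_add y).mul_const A
  have hg : DifferentiableAt ℝ (fun s : ℝ => (1 * s + ∑ i ∈ Finset.Icc 3 d,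
      ∑ j ∈ Finset.range (i + 1), (b i j * ((j : ℕ) : ℝ) * y ^ (j - 1)) * s ^ (i - j)) * B) x :=
    ((differentiableAt_fun_id.const_mul 1).add
      (diff_dsum d (fun i j => b i j * ((j : ℕ) : ℝ) * y ^ (j - 1)) (fun i j => i - j) x)).mul_const B
  have e : (fun s => pd1 (hpoly0 d b) s y * A - pd2 (hpoly0 d b) s y * B)
      = fun s => (y + ∑ i ∈ Finset.Icc 3 d, ∑ j ∈ Finset.range (i + 1),
            (b i j * ((i - j : ℕ) : ℝ) * y ^ j) * s ^ (i - j - 1)) * A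
          - (1 * s + ∑ i ∈ Finset.Icc 3 d, ∑ j ∈ Finset.range (i + 1),
            (b i j * ((j : ℕ) : ℝ) * y ^ (j - 1)) * s ^ (i - j)) * B := by
    funext s
    rw [pd1_h, pd2_h, s1 s, s2 s, one_mul]
  show deriv (fun s => pd1 (hpoly0 d b) s y * A - pd2 (hpoly0 d b) s y * B) x = _
  rw [e, deriv_fun_sub hf hg,
      deriv_mul_const ((diff_dsum d (fun i j => b i j * ((i - j : ℕ) : ℝ) * y ^ j)
        (fun i j => i - j - 1) x).const_add y),
      deriv_mul_const ((differentiableAt_fun_id.const_mul (1:ℝ)).fun_add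
        (diff_dsum d (fun i j => b i j * ((j : ℕ) : ℝ) * y ^ (j - 1)) (fun i j => i - j) x)),
      deriv_const_dsum d y (fun i j => b i j * ((i - j : ℕ) : ℝ) * y ^ j) (fun i j => i - j - 1) x,
      deriv_lin_dsum d 1 (fun i j => b i j * ((j : ℕ) : ℝ) * y ^ (j - 1)) (fun i j => i - j) x]

private lemma sum_bound (d : ℕ) (b f : ℕ → ℕ → ℝ) (K : ℝ)
    (h : ∀ i ∈ Finset.Icc 3 d, ∀ j ∈ Finset.range (i + 1), |f i j| ≤ |b i j| * K) :
    |∑ i ∈ Finset.Icc 3 d, ∑ j ∈ Finset.range (i + 1), f i j|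
      ≤ (∑ i ∈ Finset.Icc 3 d, ∑ j ∈ Finset.range (i + 1), |b i j|) * K := by
  calc |∑ i ∈ Finset.Icc 3 d, ∑ j ∈ Finset.range (i + 1), f i j|
      ≤ ∑ i ∈ Finset.Icc 3 d, |∑ j ∈ Finset.range (i + 1), f i j| :=
        Finset.abs_sum_le_sum_abs _ _
    _ ≤ ∑ i ∈ Finset.Icc 3 d, ∑ j ∈ Finset.range (i + 1), |f i j| :=
        Finset.sum_le_sum fun i _ => Finset.abs_sum_le_sum_abs _ _
    _ ≤ ∑ i ∈ Finset.Icc 3 d, ∑ j ∈ Finset.range (i + 1), |b i j| * K :=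
        Finset.sum_le_sum fun i hi => Finset.sum_le_sum fun j hj => h i hi j hj
    _ = _ := by
        rw [Finset.sum_mul]
        exact Finset.sum_congr rfl fun i _ => (Finset.sum_mul _ _ _).symm

private lemma pow_num (d i k a1 a2 : ℕ) (hi : 3 ≤ i) (hid : i ≤ d)
    (hk : k ≤ i * i) (ha : a1 + a2 ≤ i) (x y : ℝ) (hx : |x| ≤ 4) (hy : |y| ≤ 4) :
    (k : ℝ) * |x| ^ a1 * |y| ^ a2 ≤ 100 ^ d := by
  have hii : i * i ≤ 25 ^ i := by
    have h5 : i ≤ 5 ^ i := (Nat.lt_pow_self (n := i) (by norm_num : 1 < 5)).le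
    calc i * i ≤ 5 ^ i * 5 ^ i := Nat.mul_le_mul h5 h5
      _ = 25 ^ i := by rw [← Nat.mul_pow]
  have c1 : (k : ℝ) ≤ ((i * i : ℕ) : ℝ) := by exact_mod_cast hk
  have c2 : ((i * i : ℕ) : ℝ) ≤ ((25 ^ i : ℕ) : ℝ) := by exact_mod_cast hii
  have c3 : (1:ℝ) ≤ 4 := by norm_num
  have c4 : (1:ℝ) ≤ 100 := by norm_num
  calc (k : ℝ) * |x| ^ a1 * |y| ^ a2 ≤ ((i * i : ℕ) : ℝ) * (4:ℝ) ^ a1 * 4 ^ a2 := by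
        gcongr
    _ = ((i * i : ℕ) : ℝ) * (4:ℝ) ^ (a1 + a2) := by rw [pow_add]; ring
    _ ≤ ((25 ^ i : ℕ) : ℝ) * (4:ℝ) ^ i := by gcongr <;> norm_num
    _ = 100 ^ i := by push_cast; rw [← mul_pow]; norm_num
    _ ≤ 100 ^ d := by gcongr <;> norm_num

private lemma pow_numz (d i k a1 a2 : ℕ) (hi : 3 ≤ i) (hid : i ≤ d)
    (hk : k ≤ i) (ha : a1 + a2 = i - 1) (z1 z2 : ℝ) (hz1 : |z1| ≤ 2) (hz : |z2| ≤ |z1|) :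
    (k : ℝ) * |z1| ^ a1 * |z2| ^ a2 ≤ 100 ^ d * |z1| := by
  have h0 : (0:ℝ) ≤ |z1| := abs_nonneg _
  have hnat : k * 2 ^ (i - 2) ≤ 100 ^ d := by
    have h2 : i ≤ 2 ^ i := (Nat.lt_two_pow_self (n := i)).le
    calc k * 2 ^ (i - 2) ≤ 2 ^ i * 2 ^ i :=
          Nat.mul_le_mul (hk.trans h2) (Nat.pow_le_pow_right (by norm_num) (by omega))
      _ = 4 ^ i := by rw [← Nat.mul_pow]
      _ ≤ 100 ^ i := Nat.pow_le_pow_left (by norm_num) i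
      _ ≤ 100 ^ d := Nat.pow_le_pow_right (by norm_num) hid
  calc (k : ℝ) * |z1| ^ a1 * |z2| ^ a2 ≤ (k : ℝ) * |z1| ^ a1 * |z1| ^ a2 := by
        gcongr
    _ = (k : ℝ) * (|z1| ^ (i - 2) * |z1|) := by
        rw [mul_assoc, ← pow_add, ha, show i - 1 = (i - 2) + 1 by omega, pow_succ]
    _ ≤ (k : ℝ) * ((2:ℝ) ^ (i - 2) * |z1|) := by
        have := pow_le_pow_left₀ h0 hz1 (i - 2)
        gcongr
    _ = ((k * 2 ^ (i - 2) : ℕ) : ℝ) * |z1| := by push_cast; ring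
    _ ≤ ((100 ^ d : ℕ) : ℝ) * |z1| := by
        have : ((k * 2 ^ (i - 2) : ℕ) : ℝ) ≤ ((100 ^ d : ℕ) : ℝ) := by exact_mod_cast hnat
        gcongr
    _ = 100 ^ d * |z1| := by push_cast; ring

private lemma abs_term_le2 (bb : ℝ) (k1 k2 : ℕ) (x y : ℝ) (a1 a2 : ℕ) (K : ℝ)
    (h : ((k1 * k2 : ℕ) : ℝ) * |x| ^ a1 * |y| ^ a2 ≤ K) :
    |bb * (k1 : ℝ) * x ^ a1 * (k2 : ℝ) * y ^ a2| ≤ |bb| * K := by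
  have e : |bb * (k1 : ℝ) * x ^ a1 * (k2 : ℝ) * y ^ a2|
      = |bb| * (((k1 * k2 : ℕ) : ℝ) * |x| ^ a1 * |y| ^ a2) := by
    rw [abs_mul, abs_mul, abs_mul, abs_mul, abs_pow, abs_pow, Nat.abs_cast, Nat.abs_cast,
      Nat.cast_mul]
    ring
  rw [e]
  exact mul_le_mul_of_nonneg_left h (abs_nonneg _)

private lemma abs_term_le1 (bb : ℝ) (k : ℕ) (x y : ℝ) (a1 a2 : ℕ) (K : ℝ)
    (h : (k : ℝ) * |x| ^ a1 * |y| ^ a2 ≤ K) :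
    |bb * (k : ℝ) * x ^ a1 * y ^ a2| ≤ |bb| * K := by
  have e : |bb * (k : ℝ) * x ^ a1 * y ^ a2|
      = |bb| * ((k : ℝ) * |x| ^ a1 * |y| ^ a2) := by
    rw [abs_mul, abs_mul, abs_mul, abs_pow, abs_pow, Nat.abs_cast]
    ring
  rw [e]
  exact mul_le_mul_of_nonneg_left h (abs_nonneg _)

set_option maxHeartbeats 1000000 in
/-- lower bounds on `∂₂P` for the auxiliary polynomial
`P(ξ,η) = ∂₁h₀(ξ,η)∂₂h₀(ζ̄) − ∂₂h₀(ξ,η)∂₁h₀(ζ̄)` on `[-4,4]²`. -/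
theorem statement10 (d : ℕ) (hd : 3 ≤ d) :
    ∃ ε₀' > (0 : ℝ), ∀ ε₀ : ℝ, 0 < ε₀ → ε₀ ≤ ε₀' →
      ∃ K₀ : ℝ, ∀ KL : ℝ, K₀ ≤ KL →
        ∀ b : ℕ → ℕ → ℝ, CoeffSmall0 d ε₀ b →
          ∀ z : ℝ × ℝ, z ∈ Set.Icc (-2 : ℝ) 2 ×ˢ Set.Icc (-2 : ℝ) 2 →
            (2 * KL)⁻¹ < Real.sqrt (z.1 ^ 2 + z.2 ^ 2) →
            |z.2| ≤ |z.1| →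
            ∀ P : ℝ → ℝ → ℝ,
              P = (fun x y =>
                pd1 (hpoly0 d b) x y * pd2 (hpoly0 d b) z.1 z.2 -
                  pd2 (hpoly0 d b) x y * pd1 (hpoly0 d b) z.1 z.2) →
              ∀ x y : ℝ, x ∈ Set.Icc (-4 : ℝ) 4 → y ∈ Set.Icc (-4 : ℝ) 4 →
                1 / (4 * KL) ≤ |pd2 P x y| ∧
                1 / 2 * |pd1 P x y| ≤ |pd2 P x y| := by
  refine ⟨1/100, by norm_num, fun ε₀ hε0 hε1 => ⟨1, fun KL hKL b hb z hz hzr hz21 P hP x y hx hy => ?_⟩⟩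
  have hKL0 : (0:ℝ) < KL := lt_of_lt_of_le one_pos hKL
  have hz1abs : |z.1| ≤ 2 := abs_le.mpr ⟨hz.1.1, hz.1.2⟩
  have hxabs : |x| ≤ 4 := abs_le.mpr ⟨hx.1, hx.2⟩
  have hyabs : |y| ≤ 4 := abs_le.mpr ⟨hy.1, hy.2⟩
  set T : ℝ := ∑ i ∈ Finset.Icc 3 d, ∑ j ∈ Finset.range (i + 1), |b i j| with hTdef
  have hT : 100 ^ d * T ≤ ε₀ := hb
  set M : ℝ := |z.1| with hMdef
  have hM0 : 0 ≤ M := abs_nonneg _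
  have hM100 : 0 ≤ 100 ^ d * T := by
    apply mul_nonneg (by positivity)
    exact Finset.sum_nonneg fun i _ => Finset.sum_nonneg fun j _ => abs_nonneg _
  -- sqrt bound
  have hsq : z.1 ^ 2 + z.2 ^ 2 ≤ 2 * z.1 ^ 2 := by
    have h := mul_self_le_mul_self (abs_nonneg z.2) hz21
    rw [abs_mul_abs_self, abs_mul_abs_self] at h
    nlinarith
  have hMr : Real.sqrt (z.1 ^ 2 + z.2 ^ 2) ≤ Real.sqrt 2 * M := by
    calc Real.sqrt (z.1 ^ 2 + z.2 ^ 2) ≤ Real.sqrt (2 * z.1 ^ 2) := Real.sqrt_le_sqrt hsq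
      _ = Real.sqrt 2 * M := by rw [Real.sqrt_mul (by norm_num), Real.sqrt_sq_eq_abs]
  have hrM : (2 * KL)⁻¹ < Real.sqrt 2 * M := hzr.trans_le hMr
  have hsqrt2 : Real.sqrt 2 ≤ 1.92 := by
    rw [show (1.92:ℝ) = Real.sqrt (1.92 ^ 2) from (Real.sqrt_sq (by norm_num)).symm]
    exact Real.sqrt_le_sqrt (by norm_num)
  -- the four sums at (x, y)
  have hSU : |∑ i ∈ Finset.Icc 3 d, ∑ j ∈ Finset.range (i + 1),
      (b i j * ((i - j : ℕ) : ℝ) * x ^ (i - j - 1)) * ((j : ℕ) : ℝ) * y ^ (j - 1)| ≤ ε₀ := by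
    refine le_trans (sum_bound d b _ (100 ^ d) fun i hi j hj => ?_) (by rw [mul_comm]; exact hT)
    obtain ⟨hi3, hiD⟩ := Finset.mem_Icc.mp hi
    have hji : j ≤ i := by have := Finset.mem_range.mp hj; omega
    exact abs_term_le2 (b i j) (i - j) j x y (i - j - 1) (j - 1) (100 ^ d)
      (pow_num d i ((i - j) * j) (i - j - 1) (j - 1) hi3 hiD
        (Nat.mul_le_mul (Nat.sub_le i j) hji) (by omega) x y hxabs hyabs)
  have hSV : |∑ i ∈ Finset.Icc 3 d, ∑ j ∈ Finset.range (i + 1),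
      (b i j * ((j : ℕ) : ℝ) * x ^ (i - j)) * ((j - 1 : ℕ) : ℝ) * y ^ (j - 1 - 1)| ≤ ε₀ := by
    refine le_trans (sum_bound d b _ (100 ^ d) fun i hi j hj => ?_) (by rw [mul_comm]; exact hT)
    obtain ⟨hi3, hiD⟩ := Finset.mem_Icc.mp hi
    have hji : j ≤ i := by have := Finset.mem_range.mp hj; omega
    exact abs_term_le2 (b i j) j (j - 1) x y (i - j) (j - 1 - 1) (100 ^ d)
      (pow_num d i (j * (j - 1)) (i - j) (j - 1 - 1) hi3 hiD
        (Nat.mul_le_mul hji (by omega)) (by omega) x y hxabs hyabs)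
  have hSW : |∑ i ∈ Finset.Icc 3 d, ∑ j ∈ Finset.range (i + 1),
      (b i j * ((i - j : ℕ) : ℝ) * y ^ j) * ((i - j - 1 : ℕ) : ℝ) * x ^ (i - j - 1 - 1)| ≤ ε₀ := by
    refine le_trans (sum_bound d b _ (100 ^ d) fun i hi j hj => ?_) (by rw [mul_comm]; exact hT)
    obtain ⟨hi3, hiD⟩ := Finset.mem_Icc.mp hi
    have hji : j ≤ i := by have := Finset.mem_range.mp hj; omega
    exact abs_term_le2 (b i j) (i - j) (i - j - 1) y x j (i - j - 1 - 1) (100 ^ d)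
      (pow_num d i ((i - j) * (i - j - 1)) j (i - j - 1 - 1) hi3 hiD
        (Nat.mul_le_mul (Nat.sub_le i j) (by omega)) (by omega) y x hyabs hxabs)
  have hSU' : |∑ i ∈ Finset.Icc 3 d, ∑ j ∈ Finset.range (i + 1),
      (b i j * ((j : ℕ) : ℝ) * y ^ (j - 1)) * ((i - j : ℕ) : ℝ) * x ^ (i - j - 1)| ≤ ε₀ := by
    refine le_trans (sum_bound d b _ (100 ^ d) fun i hi j hj => ?_) (by rw [mul_comm]; exact hT)
    obtain ⟨hi3, hiD⟩ := Finset.mem_Icc.mp hi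
    have hji : j ≤ i := by have := Finset.mem_range.mp hj; omega
    exact abs_term_le2 (b i j) j (i - j) y x (j - 1) (i - j - 1) (100 ^ d)
      (pow_num d i (j * (i - j)) (j - 1) (i - j - 1) hi3 hiD
        (Nat.mul_le_mul hji (Nat.sub_le i j)) (by omega) y x hyabs hxabs)
  -- the sums at ζ̄
  have hSA : |∑ i ∈ Finset.Icc 3 d, ∑ j ∈ Finset.range (i + 1),
      (b i j * ((j : ℕ) : ℝ) * z.1 ^ (i - j)) * z.2 ^ (j - 1)| ≤ ε₀ * M := by
    have step : |∑ i ∈ Finset.Icc 3 d, ∑ j ∈ Finset.range (i + 1),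
        (b i j * ((j : ℕ) : ℝ) * z.1 ^ (i - j)) * z.2 ^ (j - 1)| ≤ T * (100 ^ d * M) := by
      refine sum_bound d b _ (100 ^ d * M) fun i hi j hj => ?_
      obtain ⟨hi3, hiD⟩ := Finset.mem_Icc.mp hi
      have hji : j ≤ i := by have := Finset.mem_range.mp hj; omega
      rcases Nat.eq_zero_or_pos j with h0 | hpos
      · subst h0
        simp only [Nat.cast_zero, mul_zero, zero_mul, abs_zero]
        positivity
      · exact abs_term_le1 (b i j) j z.1 z.2 (i - j) (j - 1) (100 ^ d * M)
          (pow_numz d i j (i - j) (j - 1) hi3 hiD hji (by omega) z.1 z.2 hz1abs hz21)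
    calc _ ≤ T * (100 ^ d * M) := step
      _ = (100 ^ d * T) * M := by ring
      _ ≤ ε₀ * M := mul_le_mul_of_nonneg_right hT hM0
  have hSB : |∑ i ∈ Finset.Icc 3 d, ∑ j ∈ Finset.range (i + 1),
      (b i j * ((i - j : ℕ) : ℝ) * z.1 ^ (i - j - 1)) * z.2 ^ j| ≤ ε₀ * M := by
    have step : |∑ i ∈ Finset.Icc 3 d, ∑ j ∈ Finset.range (i + 1),
        (b i j * ((i - j : ℕ) : ℝ) * z.1 ^ (i - j - 1)) * z.2 ^ j| ≤ T * (100 ^ d * M) := by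
      refine sum_bound d b _ (100 ^ d * M) fun i hi j hj => ?_
      obtain ⟨hi3, hiD⟩ := Finset.mem_Icc.mp hi
      have hji : j ≤ i := by have := Finset.mem_range.mp hj; omega
      rcases eq_or_lt_of_le hji with h0 | hlt
      · subst h0
        simp only [Nat.sub_self, Nat.cast_zero, mul_zero, zero_mul, abs_zero]
        positivity
      · exact abs_term_le1 (b i j) (i - j) z.1 z.2 (i - j - 1) j (100 ^ d * M)
          (pow_numz d i (i - j) (i - j - 1) j hi3 hiD (Nat.sub_le i j) (by omega) z.1 z.2 hz1abs hz21)
    calc _ ≤ T * (100 ^ d * M) := step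
      _ = (100 ^ d * T) * M := by ring
      _ ≤ ε₀ * M := mul_le_mul_of_nonneg_right hT hM0
  -- bounds on A = ∂₂h₀(ζ̄), B = ∂₁h₀(ζ̄)
  set A : ℝ := pd2 (hpoly0 d b) z.1 z.2 with hAdef
  set B : ℝ := pd1 (hpoly0 d b) z.1 z.2 with hBdef
  set SA : ℝ := ∑ i ∈ Finset.Icc 3 d, ∑ j ∈ Finset.range (i + 1),
      (b i j * ((j : ℕ) : ℝ) * z.1 ^ (i - j)) * z.2 ^ (j - 1) with hSAdef
  set SB : ℝ := ∑ i ∈ Finset.Icc 3 d, ∑ j ∈ Finset.range (i + 1),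
      (b i j * ((i - j : ℕ) : ℝ) * z.1 ^ (i - j - 1)) * z.2 ^ j with hSBdef
  have hA : A = z.1 + SA := pd2_h d b z.1 z.2
  have hB : B = z.2 + SB := by
    rw [hBdef, pd1_h d b z.1 z.2]
  have hAup : |A| ≤ M + ε₀ * M := by
    rw [hA]
    calc |z.1 + SA| ≤ |z.1| + |SA| := abs_add_le _ _
      _ ≤ M + ε₀ * M := add_le_add_right hSA _
  have hAlow : M - ε₀ * M ≤ |A| := by
    have h := abs_sub_abs_le_abs_sub z.1 (-SA)
    rw [abs_neg, sub_neg_eq_add] at h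
    rw [hA]
    exact le_trans (sub_le_sub_left hSA _) h
  have hBup : |B| ≤ M + ε₀ * M := by
    rw [hB]
    calc |z.2 + SB| ≤ |z.2| + |SB| := abs_add_le _ _
      _ ≤ M + ε₀ * M := add_le_add hz21 hSB
  -- compute the partials of P
  subst hP
  rw [pd2_P d b A B x y, pd1_P d b A B x y]
  set SU : ℝ := ∑ i ∈ Finset.Icc 3 d, ∑ j ∈ Finset.range (i + 1),
      (b i j * ((i - j : ℕ) : ℝ) * x ^ (i - j - 1)) * ((j : ℕ) : ℝ) * y ^ (j - 1) with hSUdef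
  set SV : ℝ := ∑ i ∈ Finset.Icc 3 d, ∑ j ∈ Finset.range (i + 1),
      (b i j * ((j : ℕ) : ℝ) * x ^ (i - j)) * ((j - 1 : ℕ) : ℝ) * y ^ (j - 1 - 1) with hSVdef
  set SW : ℝ := ∑ i ∈ Finset.Icc 3 d, ∑ j ∈ Finset.range (i + 1),
      (b i j * ((i - j : ℕ) : ℝ) * y ^ j) * ((i - j - 1 : ℕ) : ℝ) * x ^ (i - j - 1 - 1) with hSWdef
  set SU' : ℝ := ∑ i ∈ Finset.Icc 3 d, ∑ j ∈ Finset.range (i + 1),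
      (b i j * ((j : ℕ) : ℝ) * y ^ (j - 1)) * ((i - j : ℕ) : ℝ) * x ^ (i - j - 1) with hSU'def
  -- lower bound on |∂₂ P|
  have key2 : M * (96/100) ≤ |(1 + SU) * A - SV * B| := by
    have e : (1 + SU) * A - SV * B = A + (SU * A - SV * B) := by ring
    have h1 : |SU * A - SV * B| ≤ ε₀ * (M + ε₀ * M) + ε₀ * (M + ε₀ * M) := by
      calc |SU * A - SV * B| ≤ |SU * A| + |SV * B| := abs_sub _ _
        _ = |SU| * |A| + |SV| * |B| := by rw [abs_mul, abs_mul]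
        _ ≤ ε₀ * (M + ε₀ * M) + ε₀ * (M + ε₀ * M) :=
            add_le_add (mul_le_mul hSU hAup (abs_nonneg _) hε0.le)
              (mul_le_mul hSV hBup (abs_nonneg _) hε0.le)
    have h2 := abs_sub_abs_le_abs_sub A (-(SU * A - SV * B))
    rw [abs_neg, sub_neg_eq_add] at h2
    rw [e]
    have h1' : |SU * A - SV * B| ≤ 2 * (ε₀ * M) + 2 * (ε₀ * (ε₀ * M)) :=
      h1.trans (le_of_eq (by ring))
    have hem0 : 0 ≤ ε₀ * M := mul_nonneg hε0.le hM0
    have hem1 : ε₀ * M ≤ (1/100) * M := mul_le_mul_of_nonneg_right hε1 hM0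
    have hem2 : ε₀ * (ε₀ * M) ≤ (1/100) * (ε₀ * M) := mul_le_mul_of_nonneg_right hε1 hem0
    linarith
  constructor
  · calc 1 / (4 * KL) = (1/2) * (2 * KL)⁻¹ := by field_simp; ring
      _ ≤ (1/2) * (Real.sqrt 2 * M) := mul_le_mul_of_nonneg_left hrM.le (by norm_num)
      _ ≤ M * (96/100) := by
          have := mul_le_mul_of_nonneg_right hsqrt2 hM0
          norm_num at this ⊢
          linarith
      _ ≤ |(1 + SU) * A - SV * B| := key2
  · have key1 : |SW * A - (1 + SU') * B| ≤ M * (104/100) := by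
      have h3 : |1 + SU'| ≤ 1 + ε₀ := by
        calc |1 + SU'| ≤ |(1:ℝ)| + |SU'| := abs_add_le _ _
          _ ≤ 1 + ε₀ := by rw [abs_one]; exact add_le_add_right hSU' _
      calc |SW * A - (1 + SU') * B| ≤ |SW * A| + |(1 + SU') * B| := abs_sub _ _
        _ = |SW| * |A| + |1 + SU'| * |B| := by rw [abs_mul, abs_mul]
        _ ≤ ε₀ * (M + ε₀ * M) + (1 + ε₀) * (M + ε₀ * M) :=
            add_le_add (mul_le_mul hSW hAup (abs_nonneg _) hε0.le)
              (mul_le_mul h3 hBup (abs_nonneg _) (by positivity))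
        _ = M + 3 * (ε₀ * M) + 2 * (ε₀ * (ε₀ * M)) := by ring
        _ ≤ M * (104/100) := by
            have hem0 : 0 ≤ ε₀ * M := mul_nonneg hε0.le hM0
            have hem1 : ε₀ * M ≤ (1/100) * M := mul_le_mul_of_nonneg_right hε1 hM0
            have hem2 : ε₀ * (ε₀ * M) ≤ (1/100) * (ε₀ * M) := mul_le_mul_of_nonneg_right hε1 hem0
            linarith
    calc 1/2 * |SW * A - (1 + SU') * B| ≤ 1/2 * (M * (104/100)) :=
          mul_le_mul_of_nonneg_left key1 (by norm_num)
      _ ≤ M * (96/100) := by linarith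
      _ ≤ |(1 + SU) * A - SV * B| := key2
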